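/- Let 0 < α < γ < L, c₀ > 0, λ ∈ ℝ, and let θ : [0,L] → ℝ be continuously differentiable. Let v, z, S : [0,L] → ℂ be continuously differentiable with v(0) = v(L) = z(0) = z(L) = 0, let y : [0,L] → ℂ be twice continuously differentiable, and let g₂, g₄ : [0,L] → ℂ be continuous, satisfying on (0,L): i λ v − S′ + c(·) z = g₂ and i λ z − y″ − c(·) v = g₄. Then ∫₀^L c(·) θ |z|² dx = ∫₀^L c(·) θ |v|² dx − Re( ∫₀^L (θ′ z̄ + θ z̄′) S dx ) − Re( ∫₀^L (θ′ v̄ + θ v̄′) y′ dx ) + Re( ∫₀^L θ g₂ z̄ dx ) + Re( ∫₀^L θ g₄ v̄ dx ). -/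

import Mathlib

open MeasureTheory Complex

private lemma stmt_11_alg (cx θx lam : ℝ) (vx zx g2 g4 : ℂ) :
    cx * θx * ‖zx‖ ^ 2
      = cx * θx * ‖vx‖ ^ 2
        + ((θx : ℂ) * (starRingEnd ℂ) zx * (I * (lam:ℂ) * vx + (cx:ℂ) * zx - g2)).re
        + ((θx : ℂ) * (starRingEnd ℂ) vx * (I * (lam:ℂ) * zx - (cx:ℂ) * vx - g4)).re
        + ((θx : ℂ) * g2 * (starRingEnd ℂ) zx).re
        + ((θx : ℂ) * g4 * (starRingEnd ℂ) vx).re := by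
  simp [Complex.sq_norm, Complex.normSq_apply, Complex.mul_re,
    Complex.mul_im, Complex.sub_re, Complex.add_re, Complex.conj_re, Complex.conj_im]
  ring

/-- Cut-off multiplier identity transferring the estimate on `v` to an estimate on
`z` in the coupling region, where `c(x) = c₀` on `(α,γ)` and `0` elsewhere. -/
theorem stmt_11 (L α γ c₀ lam : ℝ)
    (hα : 0 < α) (hαγ : α < γ) (hγL : γ < L) (hc₀ : 0 < c₀)
    (c : ℝ → ℝ) (hc : ∀ x, c x = if α < x ∧ x < γ then c₀ else 0)
    (θ θ' : ℝ → ℝ)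
    (hθ : ∀ x ∈ Set.Icc (0:ℝ) L, HasDerivAt θ (θ' x) x)
    (hθ'c : ContinuousOn θ' (Set.Icc 0 L))
    (v v' z z' S S' : ℝ → ℂ)
    (hv : ∀ x ∈ Set.Icc (0:ℝ) L, HasDerivAt v (v' x) x)
    (hv'c : ContinuousOn v' (Set.Icc 0 L))
    (hz : ∀ x ∈ Set.Icc (0:ℝ) L, HasDerivAt z (z' x) x)
    (hz'c : ContinuousOn z' (Set.Icc 0 L))
    (hS : ∀ x ∈ Set.Icc (0:ℝ) L, HasDerivAt S (S' x) x)
    (hS'c : ContinuousOn S' (Set.Icc 0 L))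
    (hv0 : v 0 = 0) (hvL : v L = 0) (hz0 : z 0 = 0) (hzL : z L = 0)
    (y y' y'' : ℝ → ℂ)
    (hy : ∀ x ∈ Set.Icc (0:ℝ) L, HasDerivAt y (y' x) x)
    (hy' : ∀ x ∈ Set.Icc (0:ℝ) L, HasDerivAt y' (y'' x) x)
    (hy''c : ContinuousOn y'' (Set.Icc 0 L))
    (g₂ g₄ : ℝ → ℂ)
    (hg₂c : ContinuousOn g₂ (Set.Icc 0 L)) (hg₄c : ContinuousOn g₄ (Set.Icc 0 L))
    (heq2 : ∀ x ∈ Set.Ioo (0:ℝ) L,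
      Complex.I * (lam : ℂ) * v x - S' x + (c x : ℂ) * z x = g₂ x)
    (heq4 : ∀ x ∈ Set.Ioo (0:ℝ) L,
      Complex.I * (lam : ℂ) * z x - y'' x - (c x : ℂ) * v x = g₄ x) :
    ∫ x in (0:ℝ)..L, c x * θ x * ‖z x‖ ^ 2
      = (∫ x in (0:ℝ)..L, c x * θ x * ‖v x‖ ^ 2)
        - (∫ x in (0:ℝ)..L,
            ((θ' x : ℂ) * (starRingEnd ℂ) (z x)
              + (θ x : ℂ) * (starRingEnd ℂ) (z' x)) * S x).re
        - (∫ x in (0:ℝ)..L,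
            ((θ' x : ℂ) * (starRingEnd ℂ) (v x)
              + (θ x : ℂ) * (starRingEnd ℂ) (v' x)) * y' x).re
        + (∫ x in (0:ℝ)..L, (θ x : ℂ) * g₂ x * (starRingEnd ℂ) (z x)).re
        + (∫ x in (0:ℝ)..L, (θ x : ℂ) * g₄ x * (starRingEnd ℂ) (v x)).re := by
  have hL : (0:ℝ) ≤ L := le_of_lt (hα.trans (hαγ.trans hγL))
  have hIcc : Set.uIcc (0:ℝ) L = Set.Icc 0 L := Set.uIcc_of_le hL
  -- continuity of the basic functions on `Icc 0 L`
  have θc : ContinuousOn θ (Set.Icc 0 L) :=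
    fun x hx => (hθ x hx).continuousAt.continuousWithinAt
  have vc : ContinuousOn v (Set.Icc 0 L) :=
    fun x hx => (hv x hx).continuousAt.continuousWithinAt
  have zc : ContinuousOn z (Set.Icc 0 L) :=
    fun x hx => (hz x hx).continuousAt.continuousWithinAt
  have Sc : ContinuousOn S (Set.Icc 0 L) :=
    fun x hx => (hS x hx).continuousAt.continuousWithinAt
  have y'c : ContinuousOn y' (Set.Icc 0 L) :=
    fun x hx => (hy' x hx).continuousAt.continuousWithinAt
  have θCc : ContinuousOn (fun x => (θ x : ℂ)) (Set.Icc 0 L) :=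
    Complex.continuous_ofReal.comp_continuousOn θc
  have θ'Cc : ContinuousOn (fun x => (θ' x : ℂ)) (Set.Icc 0 L) :=
    Complex.continuous_ofReal.comp_continuousOn hθ'c
  have zconjc : ContinuousOn (fun x => (starRingEnd ℂ) (z x)) (Set.Icc 0 L) :=
    continuous_star.comp_continuousOn zc
  have vconjc : ContinuousOn (fun x => (starRingEnd ℂ) (v x)) (Set.Icc 0 L) :=
    continuous_star.comp_continuousOn vc
  have z'conjc : ContinuousOn (fun x => (starRingEnd ℂ) (z' x)) (Set.Icc 0 L) :=
    continuous_star.comp_continuousOn hz'c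
  have v'conjc : ContinuousOn (fun x => (starRingEnd ℂ) (v' x)) (Set.Icc 0 L) :=
    continuous_star.comp_continuousOn hv'c
  -- integrability of `c * h` for continuous `h`
  have cInt : ∀ h : ℝ → ℝ, ContinuousOn h (Set.Icc 0 L) →
      IntervalIntegrable (fun x => c x * h x) volume 0 L := by
    intro h hcont
    have heq : (fun x => c x * h x)
        = Set.indicator (Set.Ioo α γ) (fun x => c₀ * h x) := by
      funext x
      by_cases hx : x ∈ Set.Ioo α γ
      · simp [hc, Set.indicator_of_mem hx, Set.mem_Ioo.1 hx]
      · have : ¬ (α < x ∧ x < γ) := fun hxx => hx (Set.mem_Ioo.2 hxx)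
        simp [hc, Set.indicator_of_notMem hx, this]
    rw [heq, intervalIntegrable_iff_integrableOn_Ioc_of_le hL]
    have hIoo : IntegrableOn (fun x => c₀ * h x) (Set.Ioo α γ) volume := by
      refine (continuousOn_const.mul hcont).integrableOn_compact isCompact_Icc |>.mono_set ?_
      exact Set.Ioo_subset_Icc_self.trans
        (Set.Icc_subset_Icc (le_of_lt hα) (le_of_lt hγL))
    have h2 : IntegrableOn (fun x => c₀ * h x) (Set.Ioo α γ ∩ Set.Ioc 0 L) volume :=
      hIoo.mono_set Set.inter_subset_left
    rw [IntegrableOn, MeasureTheory.integrable_indicator_iff measurableSet_Ioo]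
    rwa [IntegrableOn, Measure.restrict_restrict measurableSet_Ioo]
  -- integration by parts for `θ z̄` against `S`
  have hminmax : Set.Ioo (min (0:ℝ) L) (max 0 L) = Set.Ioo 0 L := by
    rw [min_eq_left hL, max_eq_right hL]
  have ibp1 : (∫ x in (0:ℝ)..L, ((θ x : ℂ) * (starRingEnd ℂ) (z x)) * S' x)
      = - ∫ x in (0:ℝ)..L,
          ((θ' x : ℂ) * (starRingEnd ℂ) (z x)
            + (θ x : ℂ) * (starRingEnd ℂ) (z' x)) * S x := by
    have := intervalIntegral.integral_mul_deriv_eq_deriv_mul_of_hasDerivAt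
      (u := fun x => (θ x : ℂ) * (starRingEnd ℂ) (z x)) (v := S)
      (u' := fun x => (θ' x : ℂ) * (starRingEnd ℂ) (z x)
            + (θ x : ℂ) * (starRingEnd ℂ) (z' x)) (v' := S')
      (a := 0) (b := L)
      (by rw [hIcc]; exact θCc.mul zconjc)
      (by rw [hIcc]; exact Sc)
      (by rw [hminmax]; intro x hx
          have hx' : x ∈ Set.Icc (0:ℝ) L := Set.Ioo_subset_Icc_self hx
          exact ((hθ x hx').ofReal_comp.mul (hz x hx').star))
      (by rw [hminmax]; intro x hx
          exact hS x (Set.Ioo_subset_Icc_self hx))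
      (((θ'Cc.mul zconjc).add (θCc.mul z'conjc)).intervalIntegrable_of_Icc hL)
      (hS'c.intervalIntegrable_of_Icc hL)
    simpa [hz0, hzL] using this
  have ibp2 : (∫ x in (0:ℝ)..L, ((θ x : ℂ) * (starRingEnd ℂ) (v x)) * y'' x)
      = - ∫ x in (0:ℝ)..L,
          ((θ' x : ℂ) * (starRingEnd ℂ) (v x)
            + (θ x : ℂ) * (starRingEnd ℂ) (v' x)) * y' x := by
    have := intervalIntegral.integral_mul_deriv_eq_deriv_mul_of_hasDerivAt
      (u := fun x => (θ x : ℂ) * (starRingEnd ℂ) (v x)) (v := y')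
      (u' := fun x => (θ' x : ℂ) * (starRingEnd ℂ) (v x)
            + (θ x : ℂ) * (starRingEnd ℂ) (v' x)) (v' := y'')
      (a := 0) (b := L)
      (by rw [hIcc]; exact θCc.mul vconjc)
      (by rw [hIcc]; exact y'c)
      (by rw [hminmax]; intro x hx
          have hx' : x ∈ Set.Icc (0:ℝ) L := Set.Ioo_subset_Icc_self hx
          exact ((hθ x hx').ofReal_comp.mul (hv x hx').star))
      (by rw [hminmax]; intro x hx
          exact hy' x (Set.Ioo_subset_Icc_self hx))
      (((θ'Cc.mul vconjc).add (θCc.mul v'conjc)).intervalIntegrable_of_Icc hL)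
      (hy''c.intervalIntegrable_of_Icc hL)
    simpa [hv0, hvL] using this
  -- integrabilities
  have iB : IntervalIntegrable (fun x => c x * θ x * ‖v x‖ ^ 2) volume 0 L := by
    have := cInt (fun x => θ x * ‖v x‖ ^ 2) (θc.mul ((vc.norm).pow 2))
    simpa [mul_assoc] using this
  have iCc : ContinuousOn (fun x => ((θ x : ℂ) * (starRingEnd ℂ) (z x) * S' x))
      (Set.Icc 0 L) := (θCc.mul zconjc).mul hS'c
  have iDc : ContinuousOn (fun x => ((θ x : ℂ) * (starRingEnd ℂ) (v x) * y'' x))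
      (Set.Icc 0 L) := (θCc.mul vconjc).mul hy''c
  have iEc : ContinuousOn (fun x => ((θ x : ℂ) * g₂ x * (starRingEnd ℂ) (z x)))
      (Set.Icc 0 L) := (θCc.mul hg₂c).mul zconjc
  have iFc : ContinuousOn (fun x => ((θ x : ℂ) * g₄ x * (starRingEnd ℂ) (v x)))
      (Set.Icc 0 L) := (θCc.mul hg₄c).mul vconjc
  have iC : IntervalIntegrable (fun x => ((θ x : ℂ) * (starRingEnd ℂ) (z x) * S' x).re)
      volume 0 L :=
    (Complex.continuous_re.comp_continuousOn iCc).intervalIntegrable_of_Icc hL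
  have iD : IntervalIntegrable (fun x => ((θ x : ℂ) * (starRingEnd ℂ) (v x) * y'' x).re)
      volume 0 L :=
    (Complex.continuous_re.comp_continuousOn iDc).intervalIntegrable_of_Icc hL
  have iE : IntervalIntegrable (fun x => ((θ x : ℂ) * g₂ x * (starRingEnd ℂ) (z x)).re)
      volume 0 L :=
    (Complex.continuous_re.comp_continuousOn iEc).intervalIntegrable_of_Icc hL
  have iF : IntervalIntegrable (fun x => ((θ x : ℂ) * g₄ x * (starRingEnd ℂ) (v x)).re)
      volume 0 L :=
    (Complex.continuous_re.comp_continuousOn iFc).intervalIntegrable_of_Icc hL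
  -- pointwise identity a.e. on the interval
  have key : (∫ x in (0:ℝ)..L, c x * θ x * ‖z x‖ ^ 2)
      = ∫ x in (0:ℝ)..L,
          (c x * θ x * ‖v x‖ ^ 2
            + (((θ x : ℂ) * (starRingEnd ℂ) (z x) * S' x).re
              + (((θ x : ℂ) * (starRingEnd ℂ) (v x) * y'' x).re
                + (((θ x : ℂ) * g₂ x * (starRingEnd ℂ) (z x)).re
                  + ((θ x : ℂ) * g₄ x * (starRingEnd ℂ) (v x)).re)))) := by
    apply intervalIntegral.integral_congr_ae
    have hne : ∀ᵐ x : ℝ, x ≠ L := by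
      rw [MeasureTheory.ae_iff]
      simpa using measure_singleton (L : ℝ)
    filter_upwards [hne] with x hx hmem
    rw [Set.uIoc_of_le hL] at hmem
    have hx2 : x ∈ Set.Ioo (0:ℝ) L := ⟨hmem.1, lt_of_le_of_ne hmem.2 hx⟩
    have hS'x : S' x = I * (lam : ℂ) * v x + (c x : ℂ) * z x - g₂ x := by
      have h := heq2 x hx2; linear_combination -h
    have hy''x : y'' x = I * (lam : ℂ) * z x - (c x : ℂ) * v x - g₄ x := by
      have h := heq4 x hx2; linear_combination -h
    rw [hS'x, hy''x]
    have := stmt_11_alg (c x) (θ x) lam (v x) (z x) (g₂ x) (g₄ x)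
    linarith [this]
  rw [key]
  rw [intervalIntegral.integral_add iB (iC.add (iD.add (iE.add iF))),
    intervalIntegral.integral_add iC (iD.add (iE.add iF)),
    intervalIntegral.integral_add iD (iE.add iF),
    intervalIntegral.integral_add iE iF]
  have hCre : (∫ x in (0:ℝ)..L, ((θ x : ℂ) * (starRingEnd ℂ) (z x) * S' x).re)
      = (∫ x in (0:ℝ)..L, (θ x : ℂ) * (starRingEnd ℂ) (z x) * S' x).re :=
    Complex.reCLM.intervalIntegral_comp_comm (iCc.intervalIntegrable_of_Icc hL)
  have hDre : (∫ x in (0:ℝ)..L, ((θ x : ℂ) * (starRingEnd ℂ) (v x) * y'' x).re)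
      = (∫ x in (0:ℝ)..L, (θ x : ℂ) * (starRingEnd ℂ) (v x) * y'' x).re :=
    Complex.reCLM.intervalIntegral_comp_comm (iDc.intervalIntegrable_of_Icc hL)
  have hEre : (∫ x in (0:ℝ)..L, ((θ x : ℂ) * g₂ x * (starRingEnd ℂ) (z x)).re)
      = (∫ x in (0:ℝ)..L, (θ x : ℂ) * g₂ x * (starRingEnd ℂ) (z x)).re :=
    Complex.reCLM.intervalIntegral_comp_comm (iEc.intervalIntegrable_of_Icc hL)
  have hFre : (∫ x in (0:ℝ)..L, ((θ x : ℂ) * g₄ x * (starRingEnd ℂ) (v x)).re)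
      = (∫ x in (0:ℝ)..L, (θ x : ℂ) * g₄ x * (starRingEnd ℂ) (v x)).re :=
    Complex.reCLM.intervalIntegral_comp_comm (iFc.intervalIntegrable_of_Icc hL)
  rw [hCre, hDre, hEre, hFre, ibp1, ibp2]
  simp [Complex.neg_re]
  ring
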